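/- Let B be an n×n real matrix whose spectral radius ρ_B satisfies 0 < ρ_B < 1, and assume there exists a real eigenvalue μ of B with |μ| = ρ_B. Then for every β ∈ ℝ the spectral radius of T_N(B,β) satisfies ρ(T_N(B,β)) ≥ ρ_B/(1 + √(1−ρ_B²)); and if ρ(T_N(B,β)) = ρ_B/(1+√(1−ρ_B²)) for some β ∈ ℝ, then β = (1−√(1−ρ_B²))/(1+√(1−ρ_B²)). -/

import Mathlib

/-- `lam : ℂ` is an eigenvalue (over `ℂ`) of the square real matrix `A`. -/
def IsCEigenvalue {n : Type*} [Fintype n] (A : Matrix n n ℝ) (lam : ℂ) : Prop :=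
  ∃ v : n → ℂ, v ≠ 0 ∧ (A.map (Complex.ofReal)).mulVec v = lam • v

/-- The spectral radius of a square real matrix: the maximum modulus of its
eigenvalues over `ℂ`. -/
noncomputable def specRad {n : Type*} [Fintype n] (A : Matrix n n ℝ) : ℝ :=
  sSup {r : ℝ | ∃ lam : ℂ, IsCEigenvalue A lam ∧ r = ‖lam‖}

/-- The block matrix `T_N(M,β) = [[(1+β)M, −βI],[I, 0]]` (Jacobian of sNGMRES-R(1)). -/
noncomputable def TN {n : ℕ} (M : Matrix (Fin n) (Fin n) ℝ) (β : ℝ) :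
    Matrix (Fin n ⊕ Fin n) (Fin n ⊕ Fin n) ℝ :=
  Matrix.fromBlocks ((1 + β) • M) ((-β) • (1 : Matrix (Fin n) (Fin n) ℝ))
    (1 : Matrix (Fin n) (Fin n) ℝ) 0

lemma eig_abs_le {m : Type*} [Fintype m] (A : Matrix m m ℝ) {lam : ℂ}
    (h : IsCEigenvalue A lam) : ‖lam‖ ≤ ∑ i, ∑ j, |A i j| := by
  classical
  obtain ⟨v, hv0, hv⟩ := h
  obtain ⟨i0, hi0⟩ := Function.ne_iff.mp hv0
  have hne : (Finset.univ : Finset m).Nonempty := ⟨i0, Finset.mem_univ _⟩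
  obtain ⟨i, -, hi⟩ := Finset.exists_max_image Finset.univ (fun j => ‖v j‖) hne
  have hvi : 0 < ‖v i‖ := by
    have := hi i0 (Finset.mem_univ _)
    have h0 : 0 < ‖v i0‖ := by simpa using hi0
    linarith
  have hrow : ‖lam‖ * ‖v i‖ ≤ (∑ j, |A i j|) * ‖v i‖ := by
    have hline := congrFun hv i
    simp only [Matrix.mulVec, dotProduct, Pi.smul_apply, smul_eq_mul,
      Matrix.map_apply] at hline
    calc ‖lam‖ * ‖v i‖ = ‖∑ j, (A i j : ℂ) * v j‖ := by
          rw [← norm_mul, ← hline]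
      _ ≤ ∑ j, ‖(A i j : ℂ) * v j‖ := by
          exact norm_sum_le _ _
      _ ≤ ∑ j, |A i j| * ‖v i‖ := by
          apply Finset.sum_le_sum
          intro j _
          rw [norm_mul, Complex.norm_real, Real.norm_eq_abs]
          exact mul_le_mul_of_nonneg_left (hi j (Finset.mem_univ _)) (abs_nonneg _)
      _ = (∑ j, |A i j|) * ‖v i‖ := by rw [Finset.sum_mul]
  have h1 : ‖lam‖ ≤ ∑ j, |A i j| := le_of_mul_le_mul_right hrow hvi
  refine h1.trans ?_
  exact Finset.single_le_sum (f := fun i => ∑ j, |A i j|)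
    (fun i _ => Finset.sum_nonneg fun j _ => abs_nonneg _) (Finset.mem_univ i)

lemma le_specRad {m : Type*} [Fintype m] (A : Matrix m m ℝ) {lam : ℂ}
    (h : IsCEigenvalue A lam) : ‖lam‖ ≤ specRad A :=
  le_csSup ⟨∑ i, ∑ j, |A i j|, fun r ⟨l, hl, hr⟩ => hr ▸ eig_abs_le A hl⟩ ⟨lam, h, rfl⟩

lemma tn_eig {n : ℕ} {B : Matrix (Fin n) (Fin n) ℝ} {β μ : ℝ}
    {v : Fin n → ℝ} (hv : v ≠ 0) (hBv : B.mulVec v = μ • v)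
    (lam : ℂ) (hlam : lam ^ 2 - (((1 + β) * μ : ℝ) : ℂ) * lam + (β : ℂ) = 0) :
    IsCEigenvalue (TN B β) lam := by
  classical
  set w : Fin n → ℂ := fun i => (v i : ℂ) with hw
  obtain ⟨i0, hi0⟩ := Function.ne_iff.mp hv
  have hBw : (B.map Complex.ofReal).mulVec w = (μ : ℂ) • w := by
    funext i
    have hline := congrFun hBv i
    simp only [Matrix.mulVec, dotProduct, Pi.smul_apply, smul_eq_mul] at hline ⊢
    simp only [Matrix.map_apply, hw]
    push_cast
    exact_mod_cast congrArg Complex.ofReal hline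
  have e1 : ((1 + β) • B).map Complex.ofReal = ((1 + β : ℝ) : ℂ) • B.map Complex.ofReal := by
    ext i j; simp
  have e2 : ((-β) • (1 : Matrix (Fin n) (Fin n) ℝ)).map Complex.ofReal
      = ((-β : ℝ) : ℂ) • (1 : Matrix (Fin n) (Fin n) ℂ) := by
    ext i j; by_cases h : i = j <;> simp [Matrix.one_apply, h]
  have e3 : (1 : Matrix (Fin n) (Fin n) ℝ).map Complex.ofReal = 1 := by
    ext i j; by_cases h : i = j <;> simp [Matrix.one_apply, h]
  have e4 : (0 : Matrix (Fin n) (Fin n) ℝ).map Complex.ofReal = 0 := by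
    ext i j; simp
  have hmap : (TN B β).map Complex.ofReal =
      Matrix.fromBlocks (((1 + β : ℝ) : ℂ) • B.map Complex.ofReal)
        (((-β : ℝ) : ℂ) • 1) 1 0 := by
    unfold TN
    rw [Matrix.fromBlocks_map, e1, e2, e3, e4]
  refine ⟨Sum.elim (lam • w) w, ?_, ?_⟩
  · intro h
    exact hi0 (by simpa [hw, Complex.ofReal_eq_zero] using congrFun h (Sum.inr i0))
  · rw [hmap, Matrix.fromBlocks_mulVec]
    funext x
    cases x with
    | inl i =>
      simp only [Sum.elim_comp_inl, Sum.elim_comp_inr, Sum.elim_inl, Matrix.mulVec_smul,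
        Matrix.smul_mulVec, hBw, Matrix.one_mulVec, Pi.add_apply, Pi.smul_apply,
        smul_eq_mul]
      push_cast
      push_cast at hlam
      linear_combination (-(w i)) * hlam
    | inr i =>
      simp [Matrix.smul_mulVec, Matrix.one_mulVec, Matrix.zero_mulVec,
        Sum.elim_comp_inl, Sum.elim_comp_inr]


set_option maxHeartbeats 1000000 in
theorem stmt17 (n : ℕ) (B : Matrix (Fin n) (Fin n) ℝ) (ρB : ℝ)
    (h0 : 0 < ρB) (h1 : ρB < 1)
    (hρ : specRad B = ρB)
    (heig : ∃ μ : ℝ, |μ| = ρB ∧ ∃ v : Fin n → ℝ, v ≠ 0 ∧ B.mulVec v = μ • v) :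
    (∀ β : ℝ, ρB / (1 + Real.sqrt (1 - ρB ^ 2)) ≤ specRad (TN B β)) ∧
    (∀ β : ℝ, specRad (TN B β) = ρB / (1 + Real.sqrt (1 - ρB ^ 2)) →
      β = (1 - Real.sqrt (1 - ρB ^ 2)) / (1 + Real.sqrt (1 - ρB ^ 2))) := by
  obtain ⟨μ, hμ, v, hv, hBv⟩ := heig
  set s : ℝ := Real.sqrt (1 - ρB ^ 2) with hsdef
  set r : ℝ := ρB / (1 + s) with hrdef
  have h1ρ : 0 < 1 - ρB ^ 2 := by nlinarith
  have hs2 : s ^ 2 = 1 - ρB ^ 2 := Real.sq_sqrt h1ρ.le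
  have hs0 : 0 < s := Real.sqrt_pos.mpr h1ρ
  have hs1 : s < 1 := by nlinarith
  have hden : 0 < 1 + s := by linarith
  have hrρ : r * (1 + s) = ρB := by
    rw [hrdef]; field_simp
  have hr0 : 0 < r := div_pos h0 hden
  have hr2 : r ^ 2 * (1 + s) = 1 - s := by
    have h := hrρ
    nlinarith [hrρ, hs2]
  have hrlt1 : r ^ 2 < 1 := by nlinarith
  have hμ2 : μ ^ 2 = ρB ^ 2 := by
    have := abs_eq (le_of_lt h0) |>.mp hμ
    rcases this with h | h <;> rw [h] <;> ring
  -- the two cases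
  have prodcase : ∀ β : ℝ, r ^ 2 < |β| → r < specRad (TN B β) := by
    intro β hb
    obtain ⟨w, hw⟩ := IsAlgClosed.exists_pow_nat_eq
      ((((1 + β) * μ : ℝ) : ℂ) ^ 2 - 4 * (β : ℂ)) (n := 2) (by norm_num)
    set a : ℂ := (((1 + β) * μ : ℝ) : ℂ) with ha
    set l1 : ℂ := (a + w) / 2 with hl1
    set l2 : ℂ := (a - w) / 2 with hl2
    have hq1 : l1 ^ 2 - a * l1 + (β : ℂ) = 0 := by
      rw [hl1]; linear_combination hw / 4
    have hq2 : l2 ^ 2 - a * l2 + (β : ℂ) = 0 := by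
      rw [hl2]; linear_combination hw / 4
    have he1 := tn_eig hv hBv l1 hq1
    have he2 := tn_eig hv hBv l2 hq2
    have hprod : ‖l1‖ * ‖l2‖ = |β| := by
      rw [← norm_mul]
      have : l1 * l2 = (β : ℂ) := by
        rw [hl1, hl2]; linear_combination -hw / 4
      rw [this, Complex.norm_real, Real.norm_eq_abs]
    rcases le_total (‖l1‖) (‖l2‖) with h | h
    · have h2 := le_specRad _ he2
      have : r < ‖l2‖ := by
        nlinarith [norm_nonneg l1, norm_nonneg l2]
      linarith
    · have h2 := le_specRad _ he1
      have : r < ‖l1‖ := by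
        nlinarith [norm_nonneg l1, norm_nonneg l2]
      linarith
  have realcase : ∀ β : ℝ, -1 < β → β ≤ r ^ 2 →
      r ≤ specRad (TN B β) ∧ (β < r ^ 2 → r < specRad (TN B β)) := by
    intro β hb1 hb2
    set D : ℝ := (1 + β) ^ 2 * ρB ^ 2 - 4 * β with hD
    set c : ℝ := 2 * r - (1 + β) * ρB with hc
    have hident : D = c ^ 2 + 4 * s * (r ^ 2 - β) := by
      rw [hD, hc]
      linear_combination (-4*r*(1+β)) * hrρ + (4*β) * hr2
    have h4s : 0 ≤ 4 * s * (r ^ 2 - β) :=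
      mul_nonneg (by linarith) (by linarith)
    have hD0 : 0 ≤ D := by nlinarith [sq_nonneg c]
    set t : ℝ := Real.sqrt D with ht
    have ht0 : 0 ≤ t := Real.sqrt_nonneg D
    have ht2 : t ^ 2 = D := Real.sq_sqrt hD0
    set y : ℝ := ((1 + β) * ρB + t) / 2 with hy
    have hy0 : 0 < y := by
      have hpos : 0 < (1 + β) * ρB := mul_pos (by linarith) h0
      rw [hy]; linarith
    have hyroot : y ^ 2 - (1 + β) * ρB * y + β = 0 := by
      rw [hy]; linear_combination ht2 / 4
    -- the real eigenvalue x with |x| = y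
    have hxeig : ∃ x : ℝ, |x| = y ∧ x ^ 2 - (1 + β) * μ * x + β = 0 := by
      rcases (abs_eq (le_of_lt h0)).mp hμ with hμρ | hμρ
      · exact ⟨y, abs_of_pos hy0, by rw [hμρ]; linear_combination hyroot⟩
      · exact ⟨-y, by rw [abs_neg]; exact abs_of_pos hy0,
          by rw [hμρ]; linear_combination hyroot⟩
    obtain ⟨x, hxabs, hxroot⟩ := hxeig
    have hq : ((x : ℝ) : ℂ) ^ 2 - (((1 + β) * μ : ℝ) : ℂ) * ((x : ℝ) : ℂ) + (β : ℂ) = 0 := by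
      exact_mod_cast congrArg Complex.ofReal hxroot
    have he := tn_eig hv hBv ((x : ℝ) : ℂ) hq
    have hsr := le_specRad _ he
    rw [Complex.norm_real, Real.norm_eq_abs, hxabs] at hsr
    have hcle : c ≤ t := by
      refine le_trans (le_abs_self c) ?_
      rw [← Real.sqrt_sq_eq_abs, ht]
      exact Real.sqrt_le_sqrt (by linarith)
    constructor
    · have : r ≤ y := by rw [hy]; rw [hc] at hcle; linarith
      linarith
    · intro hblt
      have hclt : c < t := by
        refine lt_of_le_of_lt (le_abs_self c) ?_
        rw [← Real.sqrt_sq_eq_abs, ht]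
        have h4s' : 0 < 4 * s * (r ^ 2 - β) :=
          mul_pos (by linarith) (by linarith)
        exact Real.sqrt_lt_sqrt (sq_nonneg c) (by linarith)
      have : r < y := by rw [hy]; rw [hc] at hclt; linarith
      linarith
  have key : ∀ β : ℝ, r ≤ specRad (TN B β) ∧ (β ≠ r ^ 2 → r < specRad (TN B β)) := by
    intro β
    by_cases hb : r ^ 2 < |β|
    · have := prodcase β hb
      exact ⟨this.le, fun _ => this⟩
    · push_neg at hb
      have hb1 : -1 < β := by
        have := neg_abs_le β
        nlinarith
      have hb2 : β ≤ r ^ 2 := le_trans (le_abs_self β) hb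
      obtain ⟨ha, hstrict⟩ := realcase β hb1 hb2
      refine ⟨ha, fun hne => hstrict (lt_of_le_of_ne hb2 hne)⟩
  have hbetastar : (1 - s) / (1 + s) = r ^ 2 := by
    field_simp
    linarith [hr2]
  constructor
  · exact fun β => (key β).1
  · intro β h
    by_contra hne
    rw [hbetastar] at hne
    exact absurd h (ne_of_gt ((key β).2 hne))
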